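/- arXiv:1606.07019 — 3 statements merged into one kernel-verified Lean document; each statement's English description precedes it below -/
import Mathlib

section
/- If f = (f_0, ..., f_7) : ℝ⁸ → ℝ⁸ is twice continuously differentiable on an open set Ω and satisfies the octonionic Cauchy–Riemann–Fueter system D[f] = 0 on Ω, then each component f_j is harmonic on Ω, i.e., Δ f_j = 0 for j = 0, ..., 7. -/
open scoped BigOperators

/-- Octonion multiplication table: `octTable i j = (s, k)` means `e_i * e_j = s • e_k`. -/
def octTable : Fin 8 → Fin 8 → ℝ × Fin 8 :=
  ![![(1,0),(1,1),(1,2),(1,3),(1,4),(1,5),(1,6),(1,7)],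
    ![(1,1),(-1,0),(1,4),(1,7),(-1,2),(1,6),(-1,5),(-1,3)],
    ![(1,2),(-1,4),(-1,0),(1,5),(1,1),(-1,3),(1,7),(-1,6)],
    ![(1,3),(-1,7),(-1,5),(-1,0),(1,6),(1,2),(-1,4),(1,1)],
    ![(1,4),(1,2),(-1,1),(-1,6),(-1,0),(1,7),(1,3),(-1,5)],
    ![(1,5),(-1,6),(1,3),(-1,2),(-1,7),(-1,0),(1,1),(1,4)],
    ![(1,6),(1,5),(-1,7),(1,4),(-1,3),(-1,1),(-1,0),(1,2)],
    ![(1,7),(1,3),(1,6),(-1,1),(1,5),(-1,4),(-1,2),(-1,0)]]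

/-- The octonion `e_i * e_j`, as an element of `ℝ⁸`. -/
def octBasisMul (i j : Fin 8) : Fin 8 → ℝ :=
  fun k => if k = (octTable i j).2 then (octTable i j).1 else 0

/-- Octonion multiplication on `ℝ⁸`, extended bilinearly from the table. -/
def omul (x y : Fin 8 → ℝ) : Fin 8 → ℝ :=
  fun k => ∑ i : Fin 8, ∑ j : Fin 8, x i * y j * octBasisMul i j k

/-- The basis octonion `e_i`. -/
def octE (i : Fin 8) : Fin 8 → ℝ := fun j => if j = i then 1 else 0

/-- Partial derivative `∂g/∂x_k` of a real-valued function on `ℝ⁸`. -/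
noncomputable def pderiv8 (g : EuclideanSpace ℝ (Fin 8) → ℝ) (k : Fin 8)
    (x : EuclideanSpace ℝ (Fin 8)) : ℝ :=
  fderiv ℝ g x (EuclideanSpace.single k 1)

/-- The Cauchy–Riemann–Fueter (Dirac) operator `D[f] = ∑_j e_j (∂f/∂x_j)`
on octonion-valued functions, with octonion multiplication of basis elements:
the `e_m`-component of `D[f](x)` is `∑_j ∑_k (∂f_k/∂x_j)(x) · (e_j e_k)_m`. -/
noncomputable def CRF (f : EuclideanSpace ℝ (Fin 8) → Fin 8 → ℝ)
    (x : EuclideanSpace ℝ (Fin 8)) : Fin 8 → ℝ :=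
  fun m => ∑ j : Fin 8, ∑ k : Fin 8, pderiv8 (fun y => f y k) j x * octBasisMul j k m

/-! ### Auxiliary integer version of the multiplication table -/

def octTableZ : Fin 8 → Fin 8 → ℤ × Fin 8 :=
  ![![(1,0),(1,1),(1,2),(1,3),(1,4),(1,5),(1,6),(1,7)],
    ![(1,1),(-1,0),(1,4),(1,7),(-1,2),(1,6),(-1,5),(-1,3)],
    ![(1,2),(-1,4),(-1,0),(1,5),(1,1),(-1,3),(1,7),(-1,6)],
    ![(1,3),(-1,7),(-1,5),(-1,0),(1,6),(1,2),(-1,4),(1,1)],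
    ![(1,4),(1,2),(-1,1),(-1,6),(-1,0),(1,7),(1,3),(-1,5)],
    ![(1,5),(-1,6),(1,3),(-1,2),(-1,7),(-1,0),(1,1),(1,4)],
    ![(1,6),(1,5),(-1,7),(1,4),(-1,3),(-1,1),(-1,0),(1,2)],
    ![(1,7),(1,3),(1,6),(-1,1),(1,5),(-1,4),(-1,2),(-1,0)]]

def obmZ (i j k : Fin 8) : ℤ := if k = (octTableZ i j).2 then (octTableZ i j).1 else 0

def epsZ (q : Fin 8) : ℤ := if q = 0 then 1 else -1

lemma octTable_eq (i j : Fin 8) :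
    octTable i j = (((octTableZ i j).1 : ℝ), (octTableZ i j).2) := by
  fin_cases i <;> fin_cases j <;> norm_num [octTable, octTableZ]

lemma octBasisMul_eq (i j k : Fin 8) : octBasisMul i j k = ((obmZ i j k : ℤ) : ℝ) := by
  unfold octBasisMul obmZ
  rw [octTable_eq]
  split_ifs <;> simp

set_option maxRecDepth 8000 in
lemma keyZ : ∀ q p k j : Fin 8,
    (∑ m : Fin 8, epsZ q * obmZ q m j * obmZ p k m)
  + (∑ m : Fin 8, epsZ p * obmZ p m j * obmZ q k m)
  = if q = p ∧ k = j then 2 else 0 := by decide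

lemma keyR (q p k j : Fin 8) :
    (∑ m : Fin 8, ((epsZ q * obmZ q m j : ℤ) : ℝ) * octBasisMul p k m)
  + (∑ m : Fin 8, ((epsZ p * obmZ p m j : ℤ) : ℝ) * octBasisMul q k m)
  = if q = p ∧ k = j then 2 else 0 := by
  have := keyZ q p k j
  simp only [octBasisMul_eq]
  push_cast
  rw [show ((if q = p ∧ k = j then (2:ℝ) else 0))
      = (((if q = p ∧ k = j then (2:ℤ) else 0) : ℤ) : ℝ) by split_ifs <;> norm_num]
  exact_mod_cast this

/-- The purely algebraic step: if the symmetric array `H` of second partials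
satisfies the differentiated CRF equations, then the trace `∑ k, H k k j` vanishes. -/
lemma algebra_step (H : Fin 8 → Fin 8 → Fin 8 → ℝ)
    (hsym : ∀ q p k, H q p k = H p q k)
    (heq : ∀ q m : Fin 8, (∑ p : Fin 8, ∑ k : Fin 8, H q p k * octBasisMul p k m) = 0)
    (j : Fin 8) : (∑ k : Fin 8, H k k j) = 0 := by
  classical
  set A : Fin 8 → Fin 8 → ℝ := fun q m => ((epsZ q * obmZ q m j : ℤ) : ℝ) with hA
  set B : Fin 8 → Fin 8 → Fin 8 → ℝ :=
    fun q p k => ∑ m : Fin 8, A q m * octBasisMul p k m with hB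
  have rearr : ∀ q : Fin 8,
      (∑ m : Fin 8, A q m * (∑ p : Fin 8, ∑ k : Fin 8, H q p k * octBasisMul p k m))
      = ∑ p : Fin 8, ∑ k : Fin 8, H q p k * B q p k := by
    intro q
    simp only [hB, Finset.mul_sum]
    rw [Finset.sum_comm]
    refine Finset.sum_congr rfl fun p _ => ?_
    rw [Finset.sum_comm]
    exact Finset.sum_congr rfl fun k _ => Finset.sum_congr rfl fun m _ => by ring
  have h1 : (∑ q : Fin 8, ∑ p : Fin 8, ∑ k : Fin 8, H q p k * B q p k) = 0 := by
    rw [show (∑ q : Fin 8, ∑ p : Fin 8, ∑ k : Fin 8, H q p k * B q p k)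
        = ∑ q : Fin 8, ∑ m : Fin 8,
            A q m * (∑ p : Fin 8, ∑ k : Fin 8, H q p k * octBasisMul p k m) from
      (Finset.sum_congr rfl fun q _ => (rearr q).symm)]
    simp [heq]
  have h2 : (∑ q : Fin 8, ∑ p : Fin 8, ∑ k : Fin 8, H q p k * B p q k) = 0 := by
    calc (∑ q : Fin 8, ∑ p : Fin 8, ∑ k : Fin 8, H q p k * B p q k)
        = ∑ p : Fin 8, ∑ q : Fin 8, ∑ k : Fin 8, H q p k * B p q k := Finset.sum_comm
      _ = ∑ p : Fin 8, ∑ q : Fin 8, ∑ k : Fin 8, H p q k * B p q k := by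
          refine Finset.sum_congr rfl fun p _ => Finset.sum_congr rfl fun q _ =>
            Finset.sum_congr rfl fun k _ => ?_
          rw [hsym q p k]
      _ = 0 := h1
  have h3 : (∑ q : Fin 8, ∑ p : Fin 8, ∑ k : Fin 8,
      H q p k * (if q = p ∧ k = j then (2:ℝ) else 0)) = 0 := by
    have : (∑ q : Fin 8, ∑ p : Fin 8, ∑ k : Fin 8,
        H q p k * (B q p k + B p q k)) = 0 := by
      simp only [mul_add, Finset.sum_add_distrib, h1, h2, add_zero]
    have hsum : (∑ q : Fin 8, ∑ p : Fin 8, ∑ k : Fin 8,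
        H q p k * (if q = p ∧ k = j then (2:ℝ) else 0))
        = ∑ q : Fin 8, ∑ p : Fin 8, ∑ k : Fin 8, H q p k * (B q p k + B p q k) := by
      refine Finset.sum_congr rfl fun q _ => Finset.sum_congr rfl fun p _ =>
        Finset.sum_congr rfl fun k _ => ?_
      congr 1
      simp only [hB, hA]
      exact (keyR q p k j).symm
    rw [hsum]
    exact this
  have h4 : (∑ q : Fin 8, 2 * H q q j) = 0 := by
    rw [← h3]
    refine Finset.sum_congr rfl fun q _ => ?_
    rw [show (∑ p : Fin 8, ∑ k : Fin 8,
        H q p k * (if q = p ∧ k = j then (2:ℝ) else 0))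
        = ∑ p : Fin 8, (if q = p then 2 * H q p j else 0) from
      Finset.sum_congr rfl fun p _ => by
        by_cases hqp : q = p <;> simp [hqp, mul_ite, mul_comm]]
    simp
  have : (2:ℝ) * ∑ k : Fin 8, H k k j = 0 := by
    rw [Finset.mul_sum]; exact h4
  linarith

/-- If `f : ℝ⁸ → ℝ⁸` is C² on an open set `Ω` and satisfies the octonionic
Cauchy–Riemann–Fueter system `D[f] = 0` on `Ω`, then each component `f_j` is
harmonic on `Ω`: `Δ f_j = ∑_k ∂²f_j/∂x_k² = 0`. -/
theorem components_of_monogenic_are_harmonic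
    (Ω : Set (EuclideanSpace ℝ (Fin 8))) (hΩ : IsOpen Ω)
    (f : EuclideanSpace ℝ (Fin 8) → Fin 8 → ℝ)
    (hf : ContDiffOn ℝ 2 f Ω)
    (hmono : ∀ x ∈ Ω, CRF f x = 0) :
    ∀ x ∈ Ω, ∀ j : Fin 8,
      (∑ k : Fin 8, pderiv8 (fun y => pderiv8 (fun z => f z j) k y) k x) = 0 := by
  intro x hx j
  classical
  set e : Fin 8 → EuclideanSpace ℝ (Fin 8) := fun q => EuclideanSpace.single q (1:ℝ) with he
  set F : Fin 8 → (EuclideanSpace ℝ (Fin 8) → ℝ) := fun k y => f y k with hF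
  -- each component is C² on Ω
  have hFc2 : ∀ k, ContDiffOn ℝ 2 (F k) Ω := fun k =>
    (ContinuousLinearMap.proj (R := ℝ) (φ := fun _ : Fin 8 => ℝ) k).contDiff.comp_contDiffOn hf
  -- the full derivative of each component is C¹ on Ω
  have hdF : ∀ k, ContDiffOn ℝ 1 (fderiv ℝ (F k)) Ω := fun k =>
    (hFc2 k).fderiv_of_isOpen hΩ (by norm_num)
  set g : Fin 8 → Fin 8 → (EuclideanSpace ℝ (Fin 8) → ℝ) :=
    fun p k y => fderiv ℝ (F k) y (e p) with hg
  have hdFat : ∀ k, ∀ y ∈ Ω, DifferentiableAt ℝ (fderiv ℝ (F k)) y := fun k y hy =>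
    ((hdF k).contDiffAt (hΩ.mem_nhds hy)).differentiableAt one_ne_zero
  have hgdiff : ∀ p k, ∀ y ∈ Ω, DifferentiableAt ℝ (g p k) y := fun p k y hy =>
    (hdFat k y hy).clm_apply (differentiableAt_const _)
  set H : Fin 8 → Fin 8 → Fin 8 → ℝ := fun q p k => fderiv ℝ (g p k) x (e q) with hH
  -- symmetry of second derivatives
  have hgfd : ∀ p k, fderiv ℝ (g p k) x
      = (fderiv ℝ (fderiv ℝ (F k)) x).flip (e p) := by
    intro p k
    rw [hg]
    rw [fderiv_clm_apply (hdFat k x hx) (differentiableAt_const (e p))]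
    simp
  have hsym : ∀ q p k, H q p k = H p q k := by
    intro q p k
    have hsfd : IsSymmSndFDerivAt ℝ (F k) x :=
      ((hFc2 k).contDiffAt (hΩ.mem_nhds hx)).isSymmSndFDerivAt (by simp [minSmoothness])
    rw [hH]
    simp only [hgfd]
    exact hsfd (e q) (e p)
  -- the differentiated CRF equations
  have heq : ∀ q m : Fin 8, (∑ p : Fin 8, ∑ k : Fin 8, H q p k * octBasisMul p k m) = 0 := by
    intro q m
    have hzero : fderiv ℝ (fun y => CRF f y m) x = 0 := by
      have hev : (fun y => CRF f y m) =ᶠ[nhds x] fun _ => 0 := by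
        filter_upwards [hΩ.mem_nhds hx] with y hy
        simpa using congrFun (hmono y hy) m
      rw [hev.fderiv_eq]
      exact fderiv_const_apply 0
    have hexp : fderiv ℝ (fun y => CRF f y m) x
        = ∑ p : Fin 8, ∑ k : Fin 8, octBasisMul p k m • fderiv ℝ (g p k) x := by
      have hfun : (fun y => CRF f y m)
          = fun y => ∑ p : Fin 8, ∑ k : Fin 8, g p k y * octBasisMul p k m := rfl
      rw [hfun]
      rw [fderiv_fun_sum (fun p _ => DifferentiableAt.fun_sum (fun k _ =>
        ((hgdiff p k x hx).mul_const _)))]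
      refine Finset.sum_congr rfl fun p _ => ?_
      rw [fderiv_fun_sum (fun k _ => ((hgdiff p k x hx).mul_const _))]
      exact Finset.sum_congr rfl fun k _ => fderiv_mul_const (hgdiff p k x hx) _
    have := congrArg (fun (L : EuclideanSpace ℝ (Fin 8) →L[ℝ] ℝ) => L (e q)) hzero
    rw [hexp] at this
    simp only [ContinuousLinearMap.sum_apply, ContinuousLinearMap.coe_smul',
      Pi.smul_apply, smul_eq_mul, ContinuousLinearMap.zero_apply] at this
    rw [← this]
    refine Finset.sum_congr rfl fun p _ => Finset.sum_congr rfl fun k _ => ?_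
    rw [hH]
    ring
  have := algebra_step H hsym heq j
  rw [← this]
  rfl
end

section
/- For the M. Riesz generalized Cauchy–Riemann system in ℝⁿ (div f = 0 and ∂f_i/∂x_j = ∂f_j/∂x_i for all i, j), if f = (f_1, ..., f_n) is a C² solution on an open set, then |f|^p is subharmonic for every p ≥ (n-2)/(n-1) on the set where it is smooth. -/
/-- Partial derivative `∂g/∂x_s` of a real-valued function on `ℝ^N`. -/
noncomputable def pd {N : ℕ} (g : EuclideanSpace ℝ (Fin N) → ℝ) (s : Fin N)
    (x : EuclideanSpace ℝ (Fin N)) : ℝ :=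
  fderiv ℝ g x (EuclideanSpace.single s 1)

open Filter Finset Matrix

section helpers

variable {E : Type*} [NormedAddCommGroup E] [NormedSpace ℝ E]

lemma diff_pd {φ : E → ℝ} {x : E} (h : ContDiffAt ℝ 2 φ x) (v : E) :
    DifferentiableAt ℝ (fun y => fderiv ℝ φ y v) x := by
  have hd : DifferentiableAt ℝ (fderiv ℝ φ) x :=
    (h.fderiv_right (m := 1) (by norm_num)).differentiableAt one_ne_zero
  exact hd.clm_apply (differentiableAt_const v)

lemma pd_apply_fderiv {φ : E → ℝ} {x : E} (h : ContDiffAt ℝ 2 φ x) (v w : E) :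
    fderiv ℝ (fun y => fderiv ℝ φ y v) x w = fderiv ℝ (fderiv ℝ φ) x w v := by
  have hd : DifferentiableAt ℝ (fderiv ℝ φ) x :=
    (h.fderiv_right (m := 1) (by norm_num)).differentiableAt one_ne_zero
  rw [fderiv_clm_apply hd (differentiableAt_const v)]
  simp

lemma pd_swap {φ : E → ℝ} {x : E} (h : ContDiffAt ℝ 2 φ x) (v w : E) :
    fderiv ℝ (fun y => fderiv ℝ φ y v) x w = fderiv ℝ (fun y => fderiv ℝ φ y w) x v := by
  rw [pd_apply_fderiv h v w, pd_apply_fderiv h w v, (h.isSymmSndFDerivAt (by simp)).eq]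

end helpers

lemma aux_eig_bound {n : ℕ} (hn : 2 ≤ n) (lam : Fin n → ℝ) (hsum : ∑ i, lam i = 0) (j : Fin n) :
    (n : ℝ) * lam j ^ 2 ≤ ((n : ℝ) - 1) * ∑ i, lam i ^ 2 := by
  have hj : lam j = - ∑ i ∈ Finset.univ.erase j, lam i := by
    rw [← Finset.add_sum_erase _ _ (Finset.mem_univ j)] at hsum; linarith
  have hcard : ((Finset.univ.erase j).card : ℝ) = (n : ℝ) - 1 := by
    rw [Finset.card_erase_of_mem (Finset.mem_univ j)]
    simp only [Finset.card_univ, Fintype.card_fin]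
    have : 1 ≤ n := by omega
    push_cast [Nat.cast_sub this]
    ring
  have h1 : lam j ^ 2 ≤ ((n : ℝ) - 1) * ∑ i ∈ Finset.univ.erase j, lam i ^ 2 := by
    have h := sq_sum_le_card_mul_sum_sq (s := Finset.univ.erase j) (f := lam)
    rw [hj, neg_pow, hcard] at *
    simpa using h
  have h2 : ∑ i ∈ Finset.univ.erase j, lam i ^ 2 = (∑ i, lam i ^ 2) - lam j ^ 2 := by
    rw [← Finset.add_sum_erase _ _ (Finset.mem_univ j)]; ring
  nlinarith [sq_nonneg (lam j)]

lemma matrix_quad_bound {n : ℕ} (hn : 2 ≤ n) (A : Matrix (Fin n) (Fin n) ℝ)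
    (hA : A.IsHermitian) (htr : A.trace = 0) (v : Fin n → ℝ) :
    (n : ℝ) * ∑ k, (∑ i, A k i * v i) ^ 2 ≤
      ((n : ℝ) - 1) * (∑ k, ∑ i, A k i ^ 2) * ∑ i, v i ^ 2 := by
  classical
  set U : Matrix (Fin n) (Fin n) ℝ := (hA.eigenvectorUnitary : Matrix (Fin n) (Fin n) ℝ) with hU
  set lam : Fin n → ℝ := hA.eigenvalues with hlam
  have hU1 : star U * U = 1 := by rw [hU, ← Unitary.coe_star]; exact Unitary.coe_star_mul_self _
  have hU2 : U * star U = 1 := by rw [hU, ← Unitary.coe_star]; exact Unitary.coe_mul_star_self _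
  have hstarU : star U = Uᵀ := by
    rw [Matrix.star_eq_conjTranspose, Matrix.conjTranspose_eq_transpose_of_trivial]
  have spec : A = U * Matrix.diagonal lam * star U := by
    have := hA.spectral_theorem
    simpa [RCLike.ofReal_real_eq_id] using this
  -- unitary preserves dot products
  have hpres : ∀ x : Fin n → ℝ, (U *ᵥ x) ⬝ᵥ (U *ᵥ x) = x ⬝ᵥ x := by
    intro x
    calc (U *ᵥ x) ⬝ᵥ (U *ᵥ x) = ((U *ᵥ x) ᵥ* U) ⬝ᵥ x := by rw [Matrix.dotProduct_mulVec]
    _ = (Uᵀ *ᵥ (U *ᵥ x)) ⬝ᵥ x := by rw [Matrix.mulVec_transpose]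
    _ = ((Uᵀ * U) *ᵥ x) ⬝ᵥ x := by rw [Matrix.mulVec_mulVec]
    _ = x ⬝ᵥ x := by rw [← hstarU, hU1, Matrix.one_mulVec]
  set w : Fin n → ℝ := (star U) *ᵥ v with hw
  have hv : U *ᵥ w = v := by
    rw [hw, Matrix.mulVec_mulVec, hU2, Matrix.one_mulVec]
  have hAv : A *ᵥ v = U *ᵥ (Matrix.diagonal lam *ᵥ w) := by
    rw [spec, ← Matrix.mulVec_mulVec, ← Matrix.mulVec_mulVec, hw]
  -- sums as dot products
  have e1 : ∑ k, (∑ i, A k i * v i) ^ 2 = ∑ k, lam k ^ 2 * w k ^ 2 := by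
    have : (A *ᵥ v) ⬝ᵥ (A *ᵥ v) = ∑ k, lam k ^ 2 * w k ^ 2 := by
      rw [hAv, hpres]
      simp only [dotProduct, Matrix.mulVec_diagonal]
      exact Finset.sum_congr rfl fun k _ => by ring
    rw [← this]
    simp [dotProduct, Matrix.mulVec, pow_two]
  have e2 : ∑ i, v i ^ 2 = ∑ i, w i ^ 2 := by
    have h := hpres w
    rw [hv] at h
    simpa [dotProduct, pow_two] using h
  have e3 : ∑ k, lam k = 0 := by
    have : A.trace = ∑ k, lam k := by
      rw [spec, Matrix.trace_mul_comm, ← Matrix.mul_assoc, hU1, Matrix.one_mul,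
        Matrix.trace_diagonal]
    rw [← this, htr]
  have e4 : ∑ k, ∑ i, A k i ^ 2 = ∑ k, lam k ^ 2 := by
    have hAA : A * A = U * (Matrix.diagonal lam * Matrix.diagonal lam) * star U := by
      rw [spec]
      calc (U * Matrix.diagonal lam * star U) * (U * Matrix.diagonal lam * star U)
          = U * Matrix.diagonal lam * (star U * U) * Matrix.diagonal lam * star U := by
            simp only [Matrix.mul_assoc]
      _ = U * (Matrix.diagonal lam * Matrix.diagonal lam) * star U := by
            rw [hU1]; simp only [Matrix.mul_assoc, Matrix.one_mul]
    have h1 : (A * A).trace = ∑ k, lam k ^ 2 := by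
      rw [hAA, Matrix.trace_mul_comm, ← Matrix.mul_assoc, hU1, Matrix.one_mul,
        Matrix.diagonal_mul_diagonal, Matrix.trace_diagonal]
      exact Finset.sum_congr rfl fun k _ => (pow_two _).symm
    have h2 : (A * A).trace = ∑ k, ∑ i, A k i ^ 2 := by
      rw [Matrix.trace]
      simp only [Matrix.diag_apply, Matrix.mul_apply]
      refine Finset.sum_congr rfl fun k _ => Finset.sum_congr rfl fun i _ => ?_
      have : A i k = A k i := by
        have := congrFun (congrFun hA k) i
        simpa [Matrix.conjTranspose_apply] using this
      rw [this, pow_two]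
    rw [← h2, h1]
  rw [e1, e2, e4]
  have key : ∀ k, (n : ℝ) * (lam k ^ 2 * w k ^ 2) ≤ (((n:ℝ) - 1) * ∑ i, lam i ^ 2) * w k ^ 2 := by
    intro k
    have := aux_eig_bound hn lam e3 k
    nlinarith [sq_nonneg (w k)]
  calc (n : ℝ) * ∑ k, lam k ^ 2 * w k ^ 2 = ∑ k, (n:ℝ) * (lam k ^ 2 * w k ^ 2) := by
        rw [Finset.mul_sum]
  _ ≤ ∑ k, (((n:ℝ) - 1) * ∑ i, lam i ^ 2) * w k ^ 2 := Finset.sum_le_sum fun k _ => key k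
  _ = ((n : ℝ) - 1) * (∑ k, lam k ^ 2) * ∑ k, w k ^ 2 := by rw [← Finset.mul_sum, mul_assoc]

/-- **Stein–Weiss subharmonicity for the M. Riesz system.** If `f = (f_1, …, f_n)` is a
C² solution on an open set `Ω ⊆ ℝⁿ` of the system `div f = 0`, `∂f_i/∂x_j = ∂f_j/∂x_i`,
then for every `p ≥ (n-2)/(n-1)` the function `|f|^p` is subharmonic on the set where it
is smooth (where `f ≠ 0`): its Laplacian is nonnegative there. -/
theorem riesz_system_abs_pow_subharmonic (n : ℕ) (hn : 2 ≤ n)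
    (Ω : Set (EuclideanSpace ℝ (Fin n))) (hΩ : IsOpen Ω)
    (f : EuclideanSpace ℝ (Fin n) → EuclideanSpace ℝ (Fin n))
    (hf : ContDiffOn ℝ 2 f Ω)
    (hdiv : ∀ x ∈ Ω, (∑ j : Fin n, pd (fun y => f y j) j x) = 0)
    (hsym : ∀ x ∈ Ω, ∀ i j : Fin n,
      pd (fun y => f y j) i x = pd (fun y => f y i) j x)
    (p : ℝ) (hp : ((n : ℝ) - 2) / ((n : ℝ) - 1) ≤ p) :
    ∀ x ∈ Ω, f x ≠ 0 →
      0 ≤ ∑ k : Fin n, pd (fun y => pd (fun z => ‖f z‖ ^ p) k y) k x := by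
  intro x hx hfx
  classical
  simp only [pd] at hdiv hsym ⊢
  -- numeric facts
  have hn1 : (0:ℝ) < (n:ℝ) - 1 := by
    have : (2:ℝ) ≤ (n:ℝ) := by exact_mod_cast hn
    linarith
  have hnpos : (0:ℝ) < (n:ℝ) := by linarith
  have hp0 : 0 ≤ p := by
    refine le_trans (div_nonneg ?_ hn1.le) hp
    have : (2:ℝ) ≤ (n:ℝ) := by exact_mod_cast hn
    linarith
  -- the square-norm function
  obtain ⟨u, hu_def⟩ : ∃ u : EuclideanSpace ℝ (Fin n) → ℝ,
      u = fun y => ∑ i, f y i * f y i := ⟨_, rfl⟩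
  have hgeq : (fun z : EuclideanSpace ℝ (Fin n) => ‖f z‖ ^ p) = fun z => u z ^ (p/2) := by
    funext z
    have h0 : (0:ℝ) ≤ u z := by
      rw [hu_def]; exact Finset.sum_nonneg fun i _ => mul_self_nonneg _
    have hnorm : ‖f z‖ = Real.sqrt (u z) := by
      rw [EuclideanSpace.norm_eq]
      simp only [hu_def]
      congr 1
      exact Finset.sum_congr rfl fun i _ => by
        rw [Real.norm_eq_abs, sq_abs, pow_two]
    rw [hnorm, Real.sqrt_eq_rpow, ← Real.rpow_mul h0]
    congr 1
    ring
  rw [hgeq]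
  -- component functions are C^2
  have hφ : ∀ i : Fin n, ∀ y ∈ Ω, ContDiffAt ℝ 2 (fun z => f z i) y := by
    intro i y hy
    have hfy : ContDiffAt ℝ 2 f y := hf.contDiffAt (hΩ.mem_nhds hy)
    have h2 : (fun z => f z i) = (⇑(EuclideanSpace.proj (𝕜 := ℝ) i) ∘ f) := by
      funext z; simp
    rw [h2]
    exact ((EuclideanSpace.proj (𝕜 := ℝ) i).contDiff.contDiffAt).comp y hfy
  have hφd : ∀ i : Fin n, ∀ y ∈ Ω, DifferentiableAt ℝ (fun z => f z i) y :=
    fun i y hy => (hφ i y hy).differentiableAt two_ne_zero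
  -- derivative of u
  have hu2 : ∀ y ∈ Ω, HasFDerivAt u
      (∑ i, ((f y i) • fderiv ℝ (fun z => f z i) y + (f y i) • fderiv ℝ (fun z => f z i) y)) y := by
    intro y hy
    rw [hu_def]
    exact HasFDerivAt.fun_sum fun i _ =>
      ((hφd i y hy).hasFDerivAt).fun_mul ((hφd i y hy).hasFDerivAt)
  have hu_diff : ∀ y ∈ Ω, DifferentiableAt ℝ u y := fun y hy => (hu2 y hy).differentiableAt
  have hpdu : ∀ y ∈ Ω, ∀ k : Fin n, fderiv ℝ u y (EuclideanSpace.single k 1)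
      = ∑ i, 2 * (f y i * fderiv ℝ (fun z => f z i) y (EuclideanSpace.single k 1)) := by
    intro y hy k
    rw [(hu2 y hy).fderiv, ContinuousLinearMap.sum_apply]
    exact Finset.sum_congr rfl fun i _ => by
      simp only [ContinuousLinearMap.add_apply, ContinuousLinearMap.smul_apply, smul_eq_mul]
      ring
  have hu_c2 : ContDiffAt ℝ 2 u x := by
    rw [hu_def]
    exact ContDiffAt.sum fun i _ => (hφ i x hx).mul (hφ i x hx)
  -- the open set where f ≠ 0
  have hV : IsOpen (Ω ∩ f ⁻¹' {(0 : EuclideanSpace ℝ (Fin n))}ᶜ) :=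
    hf.continuousOn.isOpen_inter_preimage hΩ isOpen_compl_singleton
  have hxV : x ∈ Ω ∩ f ⁻¹' {(0 : EuclideanSpace ℝ (Fin n))}ᶜ := ⟨hx, by simp [hfx]⟩
  have hupos : ∀ y ∈ Ω ∩ f ⁻¹' {(0 : EuclideanSpace ℝ (Fin n))}ᶜ, 0 < u y := by
    intro y hy
    simp only [hu_def]
    have h2 : ∃ i, f y i ≠ 0 := by
      by_contra h
      push_neg at h
      exact hy.2 (by simp only [Set.mem_singleton_iff]; ext i; exact h i)
    obtain ⟨i, hi⟩ := h2
    exact Finset.sum_pos' (fun j _ => mul_self_nonneg _)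
      ⟨i, Finset.mem_univ i, mul_self_pos.mpr hi⟩
  have hu0pos : 0 < u x := hupos x hxV
  have hu0ne : u x ≠ 0 := ne_of_gt hu0pos
  -- first derivative of u^(p/2) on V
  have hg1 : ∀ y ∈ Ω ∩ f ⁻¹' {(0 : EuclideanSpace ℝ (Fin n))}ᶜ,
      HasFDerivAt (fun z => u z ^ (p/2)) ((p/2 * u y ^ (p/2 - 1)) • (fderiv ℝ u y)) y := by
    intro y hy
    have hru : HasDerivAt (fun t : ℝ => t ^ (p/2)) (p/2 * u y ^ (p/2 - 1)) (u y) :=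
      Real.hasDerivAt_rpow_const (Or.inl (ne_of_gt (hupos y hy)))
    exact hru.comp_hasFDerivAt y (hu_diff y hy.1).hasFDerivAt
  have hpdg : ∀ k : Fin n, ∀ y ∈ Ω ∩ f ⁻¹' {(0 : EuclideanSpace ℝ (Fin n))}ᶜ,
      fderiv ℝ (fun z => u z ^ (p/2)) y (EuclideanSpace.single k 1)
        = p/2 * (u y ^ (p/2 - 1) * fderiv ℝ u y (EuclideanSpace.single k 1)) := by
    intro k y hy
    rw [(hg1 y hy).fderiv]
    simp only [ContinuousLinearMap.smul_apply, smul_eq_mul]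
    ring
  have hev : ∀ k : Fin n,
      (fun y => fderiv ℝ (fun z => u z ^ (p/2)) y (EuclideanSpace.single k 1)) =ᶠ[nhds x]
      (fun y => p/2 * (u y ^ (p/2 - 1) * fderiv ℝ u y (EuclideanSpace.single k 1))) :=
    fun k => Filter.eventuallyEq_of_mem (hV.mem_nhds hxV) (fun y hy => hpdg k y hy)
  -- point data
  obtain ⟨a, ha_def⟩ : ∃ a : Fin n → ℝ, a = fun i => f x i := ⟨_, rfl⟩
  obtain ⟨m, hm_def⟩ : ∃ m : Fin n → Fin n → ℝ,
      m = fun k i => fderiv ℝ (fun z => f z i) x (EuclideanSpace.single k 1) := ⟨_, rfl⟩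
  obtain ⟨HH, hH_def⟩ : ∃ HH : Fin n → Fin n → ℝ,
      HH = fun i k => fderiv ℝ (fun y => fderiv ℝ (fun z => f z i) y
        (EuclideanSpace.single k 1)) x (EuclideanSpace.single k 1) := ⟨_, rfl⟩
  obtain ⟨W, hW_def⟩ : ∃ W : Fin n → ℝ,
      W = fun k => fderiv ℝ u x (EuclideanSpace.single k 1) := ⟨_, rfl⟩
  obtain ⟨HU, hHU_def⟩ : ∃ HU : Fin n → ℝ,
      HU = fun k => fderiv ℝ (fun y => fderiv ℝ u y (EuclideanSpace.single k 1)) x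
        (EuclideanSpace.single k 1) := ⟨_, rfl⟩
  -- second derivative of u^(p/2) at x
  have hQ : ∀ k : Fin n,
      fderiv ℝ (fun y => p/2 * (u y ^ (p/2 - 1) * fderiv ℝ u y (EuclideanSpace.single k 1))) x
        (EuclideanSpace.single k 1)
      = p/2 * (u x ^ (p/2 - 1) * HU k
          + W k * ((p/2 - 1) * u x ^ (p/2 - 1 - 1) * W k)) := by
    intro k
    have hRd : HasFDerivAt (fun y => u y ^ (p/2 - 1))
        (((p/2 - 1) * u x ^ (p/2 - 1 - 1)) • fderiv ℝ u x) x :=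
      (Real.hasDerivAt_rpow_const (Or.inl hu0ne)).comp_hasFDerivAt x
        (hu_diff x hx).hasFDerivAt
    have hSd : HasFDerivAt (fun y => fderiv ℝ u y (EuclideanSpace.single k 1))
        (fderiv ℝ (fun y => fderiv ℝ u y (EuclideanSpace.single k 1)) x) x :=
      (diff_pd hu_c2 _).hasFDerivAt
    have hprod := (hRd.fun_mul hSd).const_mul (p/2)
    rw [hprod.fderiv]
    simp only [ContinuousLinearMap.smul_apply, ContinuousLinearMap.add_apply, smul_eq_mul,
      hW_def, hHU_def]
    all_goals ring
  -- first derivative data at x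
  have hC1 : ∀ k : Fin n, W k = 2 * ∑ i, a i * m k i := by
    intro k
    simp only [hW_def]
    rw [hpdu x hx k, Finset.mul_sum]
    refine Finset.sum_congr rfl fun i _ => ?_
    simp only [ha_def, hm_def]
  -- second derivative of u at x
  have hC2 : ∀ k : Fin n, HU k = 2 * ((∑ i, m k i ^ 2) + ∑ i, a i * HH i k) := by
    intro k
    simp only [hHU_def]
    have hev2 : (fun y => fderiv ℝ u y (EuclideanSpace.single k 1)) =ᶠ[nhds x]
        (fun y => ∑ i, 2 * (f y i *
          fderiv ℝ (fun z => f z i) y (EuclideanSpace.single k 1))) :=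
      Filter.eventuallyEq_of_mem (hΩ.mem_nhds hx) (fun y hy => hpdu y hy k)
    rw [hev2.fderiv_eq]
    have hD : ∀ i : Fin n,
        HasFDerivAt (fun y => fderiv ℝ (fun z => f z i) y (EuclideanSpace.single k 1))
          (fderiv ℝ (fun y => fderiv ℝ (fun z => f z i) y (EuclideanSpace.single k 1)) x) x :=
      fun i => (diff_pd (hφ i x hx) _).hasFDerivAt
    have hsumD : HasFDerivAt
        (fun y => ∑ i, 2 * (f y i * fderiv ℝ (fun z => f z i) y (EuclideanSpace.single k 1)))
        (∑ i, (2:ℝ) • ((f x i) •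
            fderiv ℝ (fun y => fderiv ℝ (fun z => f z i) y (EuclideanSpace.single k 1)) x
          + (fderiv ℝ (fun z => f z i) x (EuclideanSpace.single k 1)) •
            fderiv ℝ (fun z => f z i) x)) x :=
      HasFDerivAt.fun_sum fun i _ => (((hφd i x hx).hasFDerivAt.fun_mul (hD i)).const_mul 2)
    rw [hsumD.fderiv, ContinuousLinearMap.sum_apply]
    rw [mul_add, Finset.mul_sum, Finset.mul_sum, ← Finset.sum_add_distrib]
    refine Finset.sum_congr rfl fun i _ => ?_
    simp only [ContinuousLinearMap.smul_apply, ContinuousLinearMap.add_apply, smul_eq_mul,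
      ha_def, hm_def, hH_def]
    all_goals ring
  -- harmonicity of the components
  have hC3 : ∀ i : Fin n, ∑ k, HH i k = 0 := by
    intro i
    have hswap : ∀ k : Fin n, HH i k =
        fderiv ℝ (fun y => fderiv ℝ (fun z => f z k) y (EuclideanSpace.single k 1)) x
          (EuclideanSpace.single i 1) := by
      intro k
      simp only [hH_def]
      have h1 : (fun y => fderiv ℝ (fun z => f z i) y (EuclideanSpace.single k 1)) =ᶠ[nhds x]
          (fun y => fderiv ℝ (fun z => f z k) y (EuclideanSpace.single i 1)) :=
        Filter.eventuallyEq_of_mem (hΩ.mem_nhds hx) (fun y hy => hsym y hy k i)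
      rw [h1.fderiv_eq]
      exact pd_swap (hφ k x hx) (EuclideanSpace.single i 1) (EuclideanSpace.single k 1)
    have hdiffs : ∀ k ∈ Finset.univ, DifferentiableAt ℝ
        (fun y => fderiv ℝ (fun z => f z k) y (EuclideanSpace.single k 1)) x :=
      fun k _ => diff_pd (hφ k x hx) _
    calc ∑ k, HH i k
        = ∑ k, fderiv ℝ (fun y => fderiv ℝ (fun z => f z k) y (EuclideanSpace.single k 1)) x
            (EuclideanSpace.single i 1) := Finset.sum_congr rfl fun k _ => hswap k
      _ = fderiv ℝ (fun y => ∑ k, fderiv ℝ (fun z => f z k) y (EuclideanSpace.single k 1)) x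
            (EuclideanSpace.single i 1) := by
          rw [fderiv_fun_sum hdiffs, ContinuousLinearMap.sum_apply]
      _ = 0 := by
          have hz : (fun y => ∑ k, fderiv ℝ (fun z => f z k) y (EuclideanSpace.single k 1))
              =ᶠ[nhds x] (fun _ => (0:ℝ)) :=
            Filter.eventuallyEq_of_mem (hΩ.mem_nhds hx) (fun y hy => hdiv y hy)
          rw [hz.fderiv_eq]
          simp
  have hmid : ∑ k, ∑ i, a i * HH i k = 0 := by
    rw [Finset.sum_comm]
    exact Finset.sum_eq_zero fun i _ => by rw [← Finset.mul_sum, hC3 i, mul_zero]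
  -- assemble the Laplacian
  obtain ⟨S1, hS1_def⟩ : ∃ S1 : ℝ, S1 = ∑ k, (∑ i, a i * m k i) ^ 2 := ⟨_, rfl⟩
  obtain ⟨T2, hT2_def⟩ : ∃ T2 : ℝ, T2 = ∑ k, ∑ i, m k i ^ 2 := ⟨_, rfl⟩
  have hc1 : u x ^ (p/2 - 1) = u x ^ (p/2 - 1 - 1) * u x := by
    have h := Real.rpow_add hu0pos (p/2 - 1 - 1) 1
    rw [Real.rpow_one] at h
    rw [← h]
    congr 1
    ring
  have htot : ∑ k, (p/2 * (u x ^ (p/2 - 1) * HU k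
        + W k * ((p/2 - 1) * u x ^ (p/2 - 1 - 1) * W k)))
      = p * u x ^ (p/2 - 1 - 1) * ((p - 2) * S1 + u x * T2) := by
    rw [hS1_def, hT2_def]
    calc ∑ k, (p/2 * (u x ^ (p/2 - 1) * HU k
          + W k * ((p/2 - 1) * u x ^ (p/2 - 1 - 1) * W k)))
        = ∑ k, ((p * u x ^ (p/2 - 1 - 1) * u x) * (∑ i, m k i ^ 2)
            + ((p * u x ^ (p/2 - 1 - 1) * u x) * (∑ i, a i * HH i k)
              + (p * (p - 2) * u x ^ (p/2 - 1 - 1)) * (∑ i, a i * m k i) ^ 2)) := by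
          refine Finset.sum_congr rfl fun k _ => ?_
          rw [hC1 k, hC2 k, hc1]
          ring
      _ = (p * u x ^ (p/2 - 1 - 1) * u x) * (∑ k, ∑ i, m k i ^ 2)
            + ((p * u x ^ (p/2 - 1 - 1) * u x) * (∑ k, ∑ i, a i * HH i k)
              + (p * (p - 2) * u x ^ (p/2 - 1 - 1)) * ∑ k, (∑ i, a i * m k i) ^ 2) := by
          rw [Finset.sum_add_distrib, Finset.sum_add_distrib, Finset.mul_sum, Finset.mul_sum,
            Finset.mul_sum]
      _ = p * u x ^ (p/2 - 1 - 1) * ((p - 2) * (∑ k, (∑ i, a i * m k i) ^ 2)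
            + u x * ∑ k, ∑ i, m k i ^ 2) := by
          rw [hmid]
          ring
  have hS1nn : 0 ≤ S1 := by
    rw [hS1_def]; exact Finset.sum_nonneg fun k _ => sq_nonneg _
  have hT2nn : 0 ≤ T2 := by
    rw [hT2_def]
    exact Finset.sum_nonneg fun k _ => Finset.sum_nonneg fun i _ => sq_nonneg _
  -- the key pointwise inequality
  have hkey : 0 ≤ (p - 2) * S1 + u x * T2 := by
    rcases le_or_gt 2 p with h2 | h2
    · have h1 : 0 ≤ (p - 2) * S1 := mul_nonneg (by linarith) hS1nn
      have h2' : 0 ≤ u x * T2 := mul_nonneg hu0pos.le hT2nn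
      linarith
    · -- use the trace-free symmetric matrix estimate
      have hmsym : ∀ k i : Fin n, m k i = m i k := by
        intro k i
        simp only [hm_def]
        exact hsym x hx k i
      obtain ⟨A, hA_def⟩ : ∃ A : Matrix (Fin n) (Fin n) ℝ,
        A = Matrix.of (fun k i => m k i) := ⟨_, rfl⟩
      have hHer : A.IsHermitian := by
        rw [Matrix.IsHermitian]
        ext k i
        simp only [Matrix.conjTranspose_apply, Matrix.of_apply, hA_def, star_trivial]
        exact hmsym i k
      have htrA : A.trace = 0 := by
        simp only [Matrix.trace, Matrix.diag, hA_def, Matrix.of_apply, hm_def]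
        exact hdiv x hx
      have hmat := matrix_quad_bound hn A hHer htrA a
      simp only [hA_def, Matrix.of_apply] at hmat
      have hScomm : ∑ k, (∑ i, m k i * a i) ^ 2 = ∑ k, (∑ i, a i * m k i) ^ 2 := by
        refine Finset.sum_congr rfl fun k _ => ?_
        congr 1
        exact Finset.sum_congr rfl fun i _ => mul_comm _ _
      rw [hScomm] at hmat
      have hux_eq : u x = ∑ i, a i ^ 2 := by
        simp only [hu_def, ha_def]
        exact Finset.sum_congr rfl fun i _ => (pow_two _).symm
      rw [← hS1_def, ← hT2_def, ← hux_eq] at hmat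
      -- hmat : n * S1 ≤ (n - 1) * T2 * u x
      have hnp : (2 - p) * ((n:ℝ) - 1) ≤ (n:ℝ) := by
        have hd := (div_le_iff₀ hn1).mp hp
        nlinarith
      have k1 : (2 - p) * ((n:ℝ) * S1) ≤ (2 - p) * (((n:ℝ) - 1) * T2 * u x) :=
        mul_le_mul_of_nonneg_left hmat (by linarith)
      have k2 : ((2 - p) * ((n:ℝ) - 1)) * (T2 * u x) ≤ (n:ℝ) * (T2 * u x) :=
        mul_le_mul_of_nonneg_right hnp (mul_nonneg hT2nn hu0pos.le)
      nlinarith [k1, k2, hnpos]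
  -- conclude
  have hstep : ∑ k, fderiv ℝ (fun y => fderiv ℝ (fun z => u z ^ (p/2)) y
        (EuclideanSpace.single k 1)) x (EuclideanSpace.single k 1)
      = ∑ k, (p/2 * (u x ^ (p/2 - 1) * HU k
        + W k * ((p/2 - 1) * u x ^ (p/2 - 1 - 1) * W k))) :=
    Finset.sum_congr rfl fun k _ => by rw [(hev k).fderiv_eq]; exact hQ k
  rw [hstep, htot]
  exact mul_nonneg (mul_nonneg hp0 (Real.rpow_pos_of_pos hu0pos _).le) hkey
end

section
/- If f is an octonion-valued monogenic C² function on a domain Ω ⊆ ℝ⁸, then |f|^p is subharmonic on Ω for every p ≥ 6/7 (on the set where f ≠ 0). -/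
open scoped BigOperators

/-! ### Auxiliary vector-notation evaluation lemmas -/

open Matrix in
@[simp] lemma oct_cv7_8 {α : Type*} (x : α) (u : Fin 7 → α) : vecCons x u 7 = u 6 := rfl
open Matrix in
@[simp] lemma oct_cv6_8 {α : Type*} (x : α) (u : Fin 7 → α) : vecCons x u 6 = u 5 := rfl
open Matrix in
@[simp] lemma oct_cv5_8 {α : Type*} (x : α) (u : Fin 7 → α) : vecCons x u 5 = u 4 := rfl
open Matrix in
@[simp] lemma oct_cv6_7 {α : Type*} (x : α) (u : Fin 6 → α) : vecCons x u 6 = u 5 := rfl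
open Matrix in
@[simp] lemma oct_cv5_7 {α : Type*} (x : α) (u : Fin 6 → α) : vecCons x u 5 = u 4 := rfl
open Matrix in
@[simp] lemma oct_cv5_6 {α : Type*} (x : α) (u : Fin 5 → α) : vecCons x u 5 = u 4 := rfl

/-! ### Algebraic expansion identities for the octonion table -/

lemma oct_exp0 (t u : Fin 8 → ℝ) :
    ∑ k : Fin 8, ∑ j : Fin 8, (t k * u j)^2 = (∑ k : Fin 8, t k ^2) * (∑ j : Fin 8, u j ^2) := by
  simp [Fin.sum_univ_eight]; ring

set_option maxHeartbeats 2000000 in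
lemma oct_exp1 (t u : Fin 8 → ℝ) :
    ∑ m : Fin 8, (∑ k : Fin 8, ∑ j : Fin 8, (t k * u j) * octBasisMul k j m)^2
      = (∑ k : Fin 8, t k ^2) * (∑ j : Fin 8, u j ^2) := by
  simp [Fin.sum_univ_eight, octBasisMul, octTable]; ring

set_option maxHeartbeats 2000000 in
lemma oct_exp2 (v : Fin 8 → ℝ) :
    ∑ k : Fin 8, ∑ j : Fin 8, (∑ m : Fin 8, v m * octBasisMul k j m)^2
      = 8 * ∑ m : Fin 8, v m ^2 := by
  simp [Fin.sum_univ_eight, octBasisMul, octTable]; ring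

set_option maxHeartbeats 2000000 in
lemma oct_exp3 (t u v : Fin 8 → ℝ) :
    ∑ k : Fin 8, ∑ j : Fin 8, (t k * u j) * (∑ m : Fin 8, v m * octBasisMul k j m)
      = ∑ m : Fin 8, v m * (∑ k : Fin 8, ∑ j : Fin 8, (t k * u j) * octBasisMul k j m) := by
  simp [Fin.sum_univ_eight]; ring

set_option maxHeartbeats 2000000 in
lemma oct_exp4 (B : Fin 8 → Fin 8 → ℝ) (v : Fin 8 → ℝ) :
    ∑ k : Fin 8, ∑ j : Fin 8, (∑ m : Fin 8, v m * octBasisMul k j m) * B k j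
      = ∑ m : Fin 8, v m * (∑ a : Fin 8, ∑ b : Fin 8, B a b * octBasisMul a b m) := by
  simp [Fin.sum_univ_eight]; ring

/-- sign of conjugation -/
def octSgn : Fin 8 → ℝ := fun i => if i = 0 then 1 else -1

set_option maxHeartbeats 4000000 in
lemma oct_harm_expand (H : Fin 8 → Fin 8 → Fin 8 → ℝ) (l : Fin 8) :
    ∑ i : Fin 8, ∑ m : Fin 8, octSgn i * octBasisMul i m l *
        (∑ a : Fin 8, ∑ b : Fin 8, ((H i a b + H a i b)/2) * octBasisMul a b m)
      = ∑ i : Fin 8, H i i l := by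
  fin_cases l <;> (simp [Fin.sum_univ_eight, octBasisMul, octTable, octSgn]; ring)

/-! ### The sharp Stein–Weiss type inequality -/

lemma oct_key_core (u : Fin 8 → ℝ) (A : Fin 8 → Fin 8 → ℝ) (t r : Fin 8 → ℝ)
    (ht : ∀ k, t k = ∑ j : Fin 8, u j * A k j)
    (hr : ∀ m, r m = ∑ k : Fin 8, ∑ j : Fin 8, (t k * u j) * octBasisMul k j m)
    (hA : ∀ m, ∑ a : Fin 8, ∑ b : Fin 8, A a b * octBasisMul a b m = 0) :
    8 * ∑ k : Fin 8, t k ^2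
      ≤ 7 * (∑ j : Fin 8, u j ^2) * (∑ k : Fin 8, ∑ j : Fin 8, A k j ^2) := by
  set S := ∑ j : Fin 8, u j ^2 with hS
  set T := ∑ k : Fin 8, t k ^2 with hT
  set F := ∑ k : Fin 8, ∑ j : Fin 8, A k j ^2 with hF
  have hTS : ∑ m : Fin 8, r m ^2 = T * S := by
    simp only [hr]; exact oct_exp1 t u
  set D : Fin 8 → Fin 8 → ℝ :=
    fun k j => t k * u j - 8⁻¹ * ∑ m : Fin 8, r m * octBasisMul k j m with hD
  have hDA : ∑ k : Fin 8, ∑ j : Fin 8, D k j * A k j = T := by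
    have e0 : ∀ k j, D k j * A k j
        = (t k * u j) * A k j - 8⁻¹ * ((∑ m : Fin 8, r m * octBasisMul k j m) * A k j) := by
      intro k j; rw [hD]; ring
    simp only [e0, Finset.sum_sub_distrib, ← Finset.mul_sum]
    rw [oct_exp4 A r]
    have e1 : ∑ k : Fin 8, ∑ j : Fin 8, (t k * u j) * A k j = T := by
      rw [hT]
      refine Finset.sum_congr rfl fun k _ => ?_
      simp_rw [mul_assoc, ← Finset.mul_sum, ← ht k, sq]
    simp [hA, e1]
  have hDD : ∑ k : Fin 8, ∑ j : Fin 8, D k j ^2 = 7/8 * (T * S) := by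
    have e0 : ∀ k j, D k j ^2
        = (t k * u j)^2 - (1/4) * ((t k * u j) * (∑ m : Fin 8, r m * octBasisMul k j m))
          + (1/64) * (∑ m : Fin 8, r m * octBasisMul k j m)^2 := by
      intro k j; rw [hD]; ring
    simp only [e0, Finset.sum_add_distrib, Finset.sum_sub_distrib, ← Finset.mul_sum]
    rw [oct_exp2 r, oct_exp3 t u r]
    have h1 : ∑ m : Fin 8, r m * (∑ k : Fin 8, ∑ j : Fin 8, (t k * u j) * octBasisMul k j m)
        = ∑ m : Fin 8, r m ^2 := by
      refine Finset.sum_congr rfl fun m _ => ?_; rw [← hr m, sq]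
    rw [h1, hTS]
    have h2 : ∑ k : Fin 8, ∑ j : Fin 8, (t k * u j)^2 = T * S := oct_exp0 t u
    rw [h2]; ring
  have hCS : (∑ k : Fin 8, ∑ j : Fin 8, D k j * A k j)^2
      ≤ (∑ k : Fin 8, ∑ j : Fin 8, D k j ^2) * (∑ k : Fin 8, ∑ j : Fin 8, A k j ^2) := by
    have h := Finset.sum_mul_sq_le_sq_mul_sq Finset.univ
      (fun q : Fin 8 × Fin 8 => D q.1 q.2) (fun q : Fin 8 × Fin 8 => A q.1 q.2)
    simpa [Fintype.sum_prod_type] using h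
  rw [hDA, hDD] at hCS
  have hT0 : 0 ≤ T := Finset.sum_nonneg fun k _ => sq_nonneg _
  have hS0 : 0 ≤ S := Finset.sum_nonneg fun k _ => sq_nonneg _
  have hF0 : 0 ≤ F := Finset.sum_nonneg fun k _ => Finset.sum_nonneg fun j _ => sq_nonneg _
  rcases eq_or_lt_of_le hT0 with h0 | hTpos
  · nlinarith [mul_nonneg hS0 hF0]
  · nlinarith [hCS]

lemma oct_key_ineq (u : Fin 8 → ℝ) (A : Fin 8 → Fin 8 → ℝ)
    (hA : ∀ m, ∑ a : Fin 8, ∑ b : Fin 8, A a b * octBasisMul a b m = 0) :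
    8 * ∑ k : Fin 8, (∑ j : Fin 8, u j * A k j) ^2
      ≤ 7 * (∑ j : Fin 8, u j ^2) * (∑ k : Fin 8, ∑ j : Fin 8, A k j ^2) :=
  oct_key_core u A _ _ (fun _ => rfl) (fun _ => rfl) hA

/-! ### The main theorem -/

/-- **Subharmonicity of `|f|^p` for octonionic monogenic functions.** If `f` is a
monogenic C² octonion-valued function on a domain `Ω ⊆ ℝ⁸`, then for every `p ≥ 6/7` the
function `|f|^p = (∑_j f_j²)^{p/2}` is subharmonic on the set where `f ≠ 0`:
its Laplacian is nonnegative there. -/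
theorem monogenic_abs_pow_subharmonic
    (Ω : Set (EuclideanSpace ℝ (Fin 8))) (hΩ : IsOpen Ω)
    (f : EuclideanSpace ℝ (Fin 8) → Fin 8 → ℝ)
    (hf : ContDiffOn ℝ 2 f Ω)
    (hmono : ∀ x ∈ Ω, CRF f x = 0)
    (p : ℝ) (hp : (6 : ℝ) / 7 ≤ p) :
    ∀ x ∈ Ω, f x ≠ 0 →
      0 ≤ ∑ k : Fin 8,
        pderiv8 (fun y => pderiv8 (fun z => Real.sqrt (∑ j : Fin 8, f z j ^ 2) ^ p) k y) k x := by
  intro x hxΩ hfx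
  -- the open neighbourhood where `f ≠ 0`
  set U : Set (EuclideanSpace ℝ (Fin 8)) := Ω ∩ {y | f y ≠ 0} with hU
  have hUopen : IsOpen U := by
    have : U = Ω ∩ f ⁻¹' ({0}ᶜ) := rfl
    rw [this]
    exact hf.continuousOn.isOpen_inter_preimage hΩ isOpen_compl_singleton
  have hxU : x ∈ U := ⟨hxΩ, hfx⟩
  have hUsub : U ⊆ Ω := Set.inter_subset_left
  -- componentwise smoothness
  have hcomp : ∀ (j : Fin 8), ∀ y ∈ U, ContDiffAt ℝ 2 (fun z => f z j) y := by
    intro j y hy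
    exact (ContinuousLinearMap.proj (R := ℝ) (φ := fun _ : Fin 8 => ℝ)
      j).contDiff.contDiffAt.comp y (hf.contDiffAt (hΩ.mem_nhds (hUsub hy)))
  have hfdiff : ∀ (j : Fin 8), ∀ y ∈ U,
      HasFDerivAt (fun z => f z j) (fderiv ℝ (fun z => f z j) y) y := fun j y hy =>
    ((hcomp j y hy).differentiableAt two_ne_zero).hasFDerivAt
  -- first partials are C¹
  have hPdcd : ∀ (k j : Fin 8), ∀ y ∈ U,
      ContDiffAt ℝ 1 (fun z => pderiv8 (fun w => f w j) k z) y := by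
    intro k j y hy
    have h2 := (hcomp j y hy).fderiv_right (m := 1) (by norm_num)
    exact h2.clm_apply contDiffAt_const
  have hPfd : ∀ (k j : Fin 8),
      HasFDerivAt (fun z => pderiv8 (fun w => f w j) k z)
        (fderiv ℝ (fun z => pderiv8 (fun w => f w j) k z) x) x := fun k j =>
    ((hPdcd k j x hxU).differentiableAt one_ne_zero).hasFDerivAt
  -- the squared norm g
  have hgderiv : ∀ y ∈ U, HasFDerivAt (fun z => ∑ j : Fin 8, f z j ^ 2)
      (∑ j : Fin 8, (2 * f y j) • fderiv ℝ (fun z => f z j) y) y := by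
    intro y hy
    refine HasFDerivAt.fun_sum fun j _ => ?_
    have h2 := (hfdiff j y hy).fun_mul (hfdiff j y hy)
    have e : (fun z => f z j ^ 2) = fun z => f z j * f z j := by funext z; ring
    rw [e, two_mul, add_smul]
    exact h2
  have hGapp : ∀ (y : EuclideanSpace ℝ (Fin 8)) (k : Fin 8),
      (∑ j : Fin 8, (2 * f y j) • fderiv ℝ (fun z => f z j) y) (EuclideanSpace.single k 1)
        = 2 * ∑ j : Fin 8, f y j * pderiv8 (fun w => f w j) k y := by
    intro y k
    simp only [ContinuousLinearMap.sum_apply, ContinuousLinearMap.smul_apply, smul_eq_mul]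
    rw [Finset.mul_sum]
    exact Finset.sum_congr rfl fun j _ => by unfold pderiv8; ring
  have hgval : ∀ y ∈ U, ∀ k, pderiv8 (fun z => ∑ j : Fin 8, f z j ^ 2) k y
      = 2 * ∑ j : Fin 8, f y j * pderiv8 (fun w => f w j) k y := by
    intro y hy k
    show fderiv ℝ _ y (EuclideanSpace.single k 1) = _
    rw [(hgderiv y hy).fderiv]
    exact hGapp y k
  have hgpos : ∀ y ∈ U, 0 < ∑ j : Fin 8, f y j ^ 2 := by
    intro y hy
    have h0 : f y ≠ 0 := hy.2
    have hex : ∃ j, f y j ≠ 0 := by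
      by_contra h; push_neg at h; exact h0 (funext h)
    obtain ⟨j0, hj0⟩ := hex
    exact Finset.sum_pos' (fun j _ => sq_nonneg _) ⟨j0, Finset.mem_univ _, by positivity⟩
  -- v = exp((p/2) log g)
  have hvderiv : ∀ y ∈ U,
      HasFDerivAt (fun z => Real.exp ((p/2) * Real.log (∑ j : Fin 8, f z j ^2)))
        ((Real.exp ((p/2) * Real.log (∑ j : Fin 8, f y j ^2))) •
          ((p/2) • ((∑ j : Fin 8, f y j ^2)⁻¹ •
            (∑ j : Fin 8, (2 * f y j) • fderiv ℝ (fun z => f z j) y)))) y := by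
    intro y hy
    exact (((hgderiv y hy).log (ne_of_gt (hgpos y hy))).const_mul (p/2)).exp
  have hvval : ∀ y ∈ U, ∀ k,
      pderiv8 (fun z => Real.exp ((p/2) * Real.log (∑ j : Fin 8, f z j ^2))) k y
      = p * Real.exp ((p/2) * Real.log (∑ j : Fin 8, f y j ^2)) *
          (∑ j : Fin 8, f y j * pderiv8 (fun w => f w j) k y) / (∑ j : Fin 8, f y j ^2) := by
    intro y hy k
    show fderiv ℝ _ y (EuclideanSpace.single k 1) = _
    rw [(hvderiv y hy).fderiv]
    simp only [ContinuousLinearMap.smul_apply, smul_eq_mul]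
    rw [hGapp y k]
    have hne := (hgpos y hy).ne'
    field_simp
  have hveq : ∀ y ∈ U, Real.sqrt (∑ j : Fin 8, f y j ^2) ^ p
      = Real.exp ((p/2) * Real.log (∑ j : Fin 8, f y j ^2)) := by
    intro y hy
    rw [Real.rpow_def_of_pos (Real.sqrt_pos.2 (hgpos y hy)), Real.log_sqrt (hgpos y hy).le]
    congr 1; ring
  have hinner : ∀ (k : Fin 8), ∀ y ∈ U,
      pderiv8 (fun z => Real.sqrt (∑ j : Fin 8, f z j ^ 2) ^ p) k y
      = p * Real.exp ((p/2) * Real.log (∑ j : Fin 8, f y j ^2)) *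
          (∑ j : Fin 8, f y j * pderiv8 (fun w => f w j) k y) / (∑ j : Fin 8, f y j ^2) := by
    intro k y hy
    have hev : (fun z => Real.sqrt (∑ j : Fin 8, f z j ^ 2) ^ p) =ᶠ[nhds y]
        (fun z => Real.exp ((p/2) * Real.log (∑ j : Fin 8, f z j ^2))) :=
      Filter.eventuallyEq_of_mem (hUopen.mem_nhds hy) hveq
    unfold pderiv8
    rw [hev.fderiv_eq]
    exact hvval y hy k
  -- monogenicity: the CRF sums vanish on Ω
  have hCRF0 : ∀ (m : Fin 8), ∀ y ∈ Ω,
      ∑ a : Fin 8, ∑ b : Fin 8, pderiv8 (fun w => f w b) a y * octBasisMul a b m = 0 := by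
    intro m y hy
    have h := congrFun (hmono y hy) m
    simpa [CRF] using h
  have hPdiffat : ∀ (a b : Fin 8), DifferentiableAt ℝ (fun z => pderiv8 (fun w => f w b) a z) x :=
    fun a b => (hPdcd a b x hxU).differentiableAt one_ne_zero
  -- differentiating the monogenicity relations
  have hHz : ∀ (i m : Fin 8),
      ∑ a : Fin 8, ∑ b : Fin 8,
        pderiv8 (fun z => pderiv8 (fun w => f w b) a z) i x * octBasisMul a b m = 0 := by
    intro i m
    have h1 : fderiv ℝ (fun y => ∑ a : Fin 8, ∑ b : Fin 8,
        pderiv8 (fun w => f w b) a y * octBasisMul a b m) x = 0 := by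
      have hev : (fun y => ∑ a : Fin 8, ∑ b : Fin 8,
          pderiv8 (fun w => f w b) a y * octBasisMul a b m) =ᶠ[nhds x] (fun _ => (0:ℝ)) :=
        Filter.eventuallyEq_of_mem (hΩ.mem_nhds hxΩ) (fun y hy => hCRF0 m y hy)
      rw [hev.fderiv_eq]
      exact fderiv_const_apply 0
    have h2 : fderiv ℝ (fun y => ∑ a : Fin 8, ∑ b : Fin 8,
        pderiv8 (fun w => f w b) a y * octBasisMul a b m) x
        = ∑ a : Fin 8, ∑ b : Fin 8, octBasisMul a b m •
            fderiv ℝ (fun z => pderiv8 (fun w => f w b) a z) x := by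
      rw [fderiv_fun_sum (fun a _ => DifferentiableAt.fun_sum (fun b _ => (hPdiffat a b).mul_const _))]
      refine Finset.sum_congr rfl fun a _ => ?_
      rw [fderiv_fun_sum (fun b _ => (hPdiffat a b).mul_const _)]
      refine Finset.sum_congr rfl fun b _ => ?_
      rw [fderiv_mul_const (hPdiffat a b)]
    have h5 : ∑ a : Fin 8, ∑ b : Fin 8,
        pderiv8 (fun z => pderiv8 (fun w => f w b) a z) i x * octBasisMul a b m
        = (∑ a : Fin 8, ∑ b : Fin 8, octBasisMul a b m •
            fderiv ℝ (fun z => pderiv8 (fun w => f w b) a z) x) (EuclideanSpace.single i 1) := by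
      simp only [ContinuousLinearMap.sum_apply, ContinuousLinearMap.smul_apply, smul_eq_mul,
        pderiv8]
      exact Finset.sum_congr rfl fun a _ => Finset.sum_congr rfl fun b _ => mul_comm _ _
    rw [h5, ← h2, h1]
    simp
  -- symmetry of second derivatives
  have hsymm : ∀ (i k j : Fin 8), pderiv8 (fun z => pderiv8 (fun w => f w j) k z) i x
      = pderiv8 (fun z => pderiv8 (fun w => f w j) i z) k x := by
    intro i k j
    have hd2 : DifferentiableAt ℝ (fderiv ℝ (fun z => f z j)) x :=
      ((hcomp j x hxU).fderiv_right (m := 1) (by norm_num)).differentiableAt one_ne_zero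
    have happ : ∀ w v : EuclideanSpace ℝ (Fin 8),
        fderiv ℝ (fun z => fderiv ℝ (fun w' => f w' j) z w) x v
          = fderiv ℝ (fderiv ℝ (fun z => f z j)) x v w := by
      intro w v
      rw [fderiv_clm_apply hd2 (differentiableAt_const w)]
      simp
    have hs := (hcomp j x hxU).isSymmSndFDerivAt (by simp [minSmoothness_of_isRCLikeNormedField])
    show fderiv ℝ _ x _ = fderiv ℝ _ x _
    unfold pderiv8
    rw [happ (EuclideanSpace.single k 1) (EuclideanSpace.single i 1),
      happ (EuclideanSpace.single i 1) (EuclideanSpace.single k 1)]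
    exact hs _ _
  -- harmonicity of the components
  have hharm : ∀ (l : Fin 8),
      ∑ i : Fin 8, pderiv8 (fun z => pderiv8 (fun w => f w l) i z) i x = 0 := by
    intro l
    have hz2 : ∀ i m, ∑ a : Fin 8, ∑ b : Fin 8,
        (((fun i a b => pderiv8 (fun z => pderiv8 (fun w => f w b) a z) i x) i a b
          + (fun i a b => pderiv8 (fun z => pderiv8 (fun w => f w b) a z) i x) a i b)/2)
          * octBasisMul a b m = 0 := by
      intro i m
      have e : ∀ a b : Fin 8,
          ((pderiv8 (fun z => pderiv8 (fun w => f w b) a z) i x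
            + pderiv8 (fun z => pderiv8 (fun w => f w b) i z) a x)/2)
          = pderiv8 (fun z => pderiv8 (fun w => f w b) a z) i x := by
        intro a b
        rw [hsymm a i b]
        ring
      calc ∑ a : Fin 8, ∑ b : Fin 8,
            ((pderiv8 (fun z => pderiv8 (fun w => f w b) a z) i x
              + pderiv8 (fun z => pderiv8 (fun w => f w b) i z) a x)/2) * octBasisMul a b m
          = ∑ a : Fin 8, ∑ b : Fin 8,
            pderiv8 (fun z => pderiv8 (fun w => f w b) a z) i x * octBasisMul a b m := by
            exact Finset.sum_congr rfl fun a _ => Finset.sum_congr rfl fun b _ => by rw [e a b]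
        _ = 0 := hHz i m
    have hkey := oct_harm_expand
      (fun i a b => pderiv8 (fun z => pderiv8 (fun w => f w b) a z) i x) l
    rw [← hkey]
    refine Finset.sum_eq_zero fun i _ => ?_
    refine Finset.sum_eq_zero fun m _ => ?_
    rw [hz2 i m, mul_zero]
  -- second derivative of the rewritten function, at x
  have hgd := hgderiv x hxU
  have hsxpos : 0 < ∑ j : Fin 8, f x j ^ 2 := hgpos x hxU
  have hsxne : (∑ j : Fin 8, f x j ^ 2) ≠ 0 := ne_of_gt hsxpos
  have hvd : HasFDerivAt (fun z => Real.exp ((p/2) * Real.log (∑ j : Fin 8, f z j ^2)))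
      (fderiv ℝ (fun z => Real.exp ((p/2) * Real.log (∑ j : Fin 8, f z j ^2))) x) x :=
    (hvderiv x hxU).differentiableAt.hasFDerivAt
  have hsecond : ∀ k : Fin 8,
      pderiv8 (fun y => p * Real.exp ((p/2) * Real.log (∑ j : Fin 8, f y j ^2)) *
          (∑ j : Fin 8, f y j * pderiv8 (fun w => f w j) k y) / (∑ j : Fin 8, f y j ^2)) k x
      = p * Real.exp ((p/2) * Real.log (∑ j : Fin 8, f x j ^2)) / (∑ j : Fin 8, f x j ^2)^2 *
          ((p - 2) * (∑ j : Fin 8, f x j * pderiv8 (fun w => f w j) k x)^2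
            + (∑ j : Fin 8, f x j ^2) *
              (∑ j : Fin 8, (f x j * pderiv8 (fun z => pderiv8 (fun w => f w j) k z) k x
                + pderiv8 (fun w => f w j) k x ^2))) := by
    intro k
    have hqd : HasFDerivAt (fun z => ∑ j : Fin 8, f z j * pderiv8 (fun w => f w j) k z)
        (∑ j : Fin 8, (f x j • fderiv ℝ (fun z => pderiv8 (fun w => f w j) k z) x
          + pderiv8 (fun w => f w j) k x • fderiv ℝ (fun z => f z j) x)) x :=
      HasFDerivAt.fun_sum fun j _ => (hfdiff j x hxU).fun_mul (hPfd k j)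
    have hinv : HasFDerivAt (fun y => (∑ j : Fin 8, f y j ^2)⁻¹)
        ((ContinuousLinearMap.smulRight (1 : ℝ →L[ℝ] ℝ) (-((∑ j : Fin 8, f x j ^2) ^ 2)⁻¹)).comp
          (∑ j : Fin 8, (2 * f x j) • fderiv ℝ (fun z => f z j) x)) x :=
      (hasFDerivAt_inv hsxne).comp x hgd
    have hnum := (hvd.const_mul p).fun_mul hqd
    have hall := hnum.fun_mul hinv
    have heq : (fun y => p * Real.exp ((p/2) * Real.log (∑ j : Fin 8, f y j ^2)) *
        (∑ j : Fin 8, f y j * pderiv8 (fun w => f w j) k y) / (∑ j : Fin 8, f y j ^2))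
        = fun y => (p * Real.exp ((p/2) * Real.log (∑ j : Fin 8, f y j ^2)) *
          (∑ j : Fin 8, f y j * pderiv8 (fun w => f w j) k y)) * (∑ j : Fin 8, f y j ^2)⁻¹ := by
      funext y; rw [div_eq_mul_inv]
    show fderiv ℝ _ x (EuclideanSpace.single k 1) = _
    rw [heq, hall.fderiv]
    have hv1 : fderiv ℝ (fun z => Real.exp ((p/2) * Real.log (∑ j : Fin 8, f z j ^2))) x
        (EuclideanSpace.single k 1)
        = p * Real.exp ((p/2) * Real.log (∑ j : Fin 8, f x j ^2)) *
          (∑ j : Fin 8, f x j * pderiv8 (fun w => f w j) k x) / (∑ j : Fin 8, f x j ^2) :=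
      hvval x hxU k
    have hq1 : (∑ j : Fin 8, (f x j • fderiv ℝ (fun z => pderiv8 (fun w => f w j) k z) x
          + pderiv8 (fun w => f w j) k x • fderiv ℝ (fun z => f z j) x))
          (EuclideanSpace.single k 1)
        = ∑ j : Fin 8, (f x j * pderiv8 (fun z => pderiv8 (fun w => f w j) k z) k x
            + pderiv8 (fun w => f w j) k x ^2) := by
      simp only [ContinuousLinearMap.sum_apply, ContinuousLinearMap.add_apply,
        ContinuousLinearMap.smul_apply, smul_eq_mul]
      exact Finset.sum_congr rfl fun j _ => by unfold pderiv8; ring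
    have hg1 : (∑ j : Fin 8, (2 * f x j) • fderiv ℝ (fun z => f z j) x)
        (EuclideanSpace.single k 1)
        = 2 * ∑ j : Fin 8, f x j * pderiv8 (fun w => f w j) k x := hGapp x k
    simp only [ContinuousLinearMap.add_apply, ContinuousLinearMap.smul_apply,
      ContinuousLinearMap.comp_apply, ContinuousLinearMap.smulRight_apply,
      ContinuousLinearMap.one_apply, smul_eq_mul]
    rw [hv1, hq1, hg1]
    field_simp
    ring
  -- switch from the statement's function to the explicit formula
  have houter : ∀ k : Fin 8,
      pderiv8 (fun y => pderiv8 (fun z => Real.sqrt (∑ j : Fin 8, f z j ^ 2) ^ p) k y) k x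
      = pderiv8 (fun y => p * Real.exp ((p/2) * Real.log (∑ j : Fin 8, f y j ^2)) *
          (∑ j : Fin 8, f y j * pderiv8 (fun w => f w j) k y) / (∑ j : Fin 8, f y j ^2)) k x := by
    intro k
    have hev : (fun y => pderiv8 (fun z => Real.sqrt (∑ j : Fin 8, f z j ^ 2) ^ p) k y)
        =ᶠ[nhds x] (fun y => p * Real.exp ((p/2) * Real.log (∑ j : Fin 8, f y j ^2)) *
          (∑ j : Fin 8, f y j * pderiv8 (fun w => f w j) k y) / (∑ j : Fin 8, f y j ^2)) :=
      Filter.eventuallyEq_of_mem (hUopen.mem_nhds hxU) (fun y hy => hinner k y hy)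
    show fderiv ℝ _ x _ = fderiv ℝ _ x _
    rw [hev.fderiv_eq]
  -- the key inequality
  have hkey := oct_key_ineq (f x) (fun a b => pderiv8 (fun w => f w b) a x)
    (fun m => hCRF0 m x hxΩ)
  -- assembling the Laplacian
  have hsumrw : ∑ k : Fin 8,
      pderiv8 (fun y => pderiv8 (fun z => Real.sqrt (∑ j : Fin 8, f z j ^ 2) ^ p) k y) k x
      = p * Real.exp ((p/2) * Real.log (∑ j : Fin 8, f x j ^2)) / (∑ j : Fin 8, f x j ^2)^2 *
          ((p - 2) * (∑ k : Fin 8, (∑ j : Fin 8, f x j * pderiv8 (fun w => f w j) k x)^2)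
            + (∑ j : Fin 8, f x j ^2) *
              (∑ k : Fin 8, ∑ j : Fin 8, pderiv8 (fun w => f w j) k x ^2)) := by
    rw [Finset.sum_congr rfl (fun k _ => (houter k).trans (hsecond k))]
    rw [← Finset.mul_sum]
    congr 1
    rw [Finset.sum_add_distrib, ← Finset.mul_sum, ← Finset.mul_sum]
    congr 1
    congr 1
    have hsplit : ∑ k : Fin 8, (∑ j : Fin 8,
        (f x j * pderiv8 (fun z => pderiv8 (fun w => f w j) k z) k x
          + pderiv8 (fun w => f w j) k x ^2))
        = (∑ k : Fin 8, ∑ j : Fin 8,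
            f x j * pderiv8 (fun z => pderiv8 (fun w => f w j) k z) k x)
          + ∑ k : Fin 8, ∑ j : Fin 8, pderiv8 (fun w => f w j) k x ^2 := by
      rw [← Finset.sum_add_distrib]
      exact Finset.sum_congr rfl fun k _ => Finset.sum_add_distrib
    rw [hsplit]
    have hzero : ∑ k : Fin 8, ∑ j : Fin 8,
        f x j * pderiv8 (fun z => pderiv8 (fun w => f w j) k z) k x = 0 := by
      rw [Finset.sum_comm]
      refine Finset.sum_eq_zero fun j _ => ?_
      rw [← Finset.mul_sum, hharm j, mul_zero]
    rw [hzero, zero_add]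
  rw [hsumrw]
  -- final positivity
  have hTq0 : 0 ≤ ∑ k : Fin 8, (∑ j : Fin 8, f x j * pderiv8 (fun w => f w j) k x)^2 :=
    Finset.sum_nonneg fun k _ => sq_nonneg _
  have hF0 : 0 ≤ ∑ k : Fin 8, ∑ j : Fin 8, pderiv8 (fun w => f w j) k x ^2 :=
    Finset.sum_nonneg fun k _ => Finset.sum_nonneg fun j _ => sq_nonneg _
  have hppos : (0:ℝ) < p := lt_of_lt_of_le (by norm_num) hp
  have hbr : 0 ≤ (p - 2) * (∑ k : Fin 8, (∑ j : Fin 8, f x j * pderiv8 (fun w => f w j) k x)^2)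
      + (∑ j : Fin 8, f x j ^2) * (∑ k : Fin 8, ∑ j : Fin 8, pderiv8 (fun w => f w j) k x ^2) := by
    nlinarith [hkey, mul_nonneg (sub_nonneg.2 hp) hTq0]
  have hpre : 0 ≤ p * Real.exp ((p/2) * Real.log (∑ j : Fin 8, f x j ^2))
      / (∑ j : Fin 8, f x j ^2)^2 := by positivity
  exact mul_nonneg hpre hbr
end
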